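/- Let G₁, G₂ be finite abelian groups and suppose S₁ ⊆ G₁ is formally dual to T₁ ⊆ Ĝ₁ and S₂ ⊆ G₂ is formally dual to T₂ ⊆ Ĝ₂ (in the pointwise sense: for all y ∈ Ĝᵢ, |(1/|Sᵢ|) ∑_{v ∈ Sᵢ} y(v)|² = (1/|Tᵢ|) · #{(w,w') ∈ Tᵢ² : y = w-w'}). Then S₁ × S₂ ⊆ G₁ × G₂ is formally dual to T₁ × T₂ ⊆ Ĝ₁ × Ĝ₂, identifying the dual of G₁ × G₂ with Ĝ₁ × Ĝ₂. -/

import Mathlib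

open scoped Classical

/-- Pointwise formal duality condition for `S ⊆ G` and `T ⊆ Ĝ`, where the dual group `Ĝ`
is realized as the group `AddChar G ℂ` of complex-valued characters, written additively. -/
def IsFormallyDual {G : Type*} [AddCommGroup G] [Fintype G]
    (S : Finset G) (T : Finset (AddChar G ℂ)) : Prop :=
  ∀ y : AddChar G ℂ,
    ‖(S.card : ℂ)⁻¹ * ∑ v ∈ S, y v‖ ^ 2 =
      (T.card : ℝ)⁻¹ * ((T ×ˢ T).filter fun p => y = p.1 - p.2).card

/-- The character of `G₁ × G₂` corresponding to a pair of characters of `G₁` and `G₂`,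
realizing the identification of the dual of `G₁ × G₂` with `Ĝ₁ × Ĝ₂`:
`(y₁, y₂)(x₁, x₂) = y₁(x₁) y₂(x₂)`. -/
def AddChar.prodChar {G₁ G₂ : Type*} [AddCommGroup G₁] [AddCommGroup G₂]
    (y₁ : AddChar G₁ ℂ) (y₂ : AddChar G₂ ℂ) : AddChar (G₁ × G₂) ℂ :=
  y₁.compAddMonoidHom (AddMonoidHom.fst G₁ G₂) *
    y₂.compAddMonoidHom (AddMonoidHom.snd G₁ G₂)

section Aux
variable {G₁ G₂ : Type*} [AddCommGroup G₁] [AddCommGroup G₂]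

lemma prodChar_apply (y₁ : AddChar G₁ ℂ) (y₂ : AddChar G₂ ℂ) (x : G₁ × G₂) :
    y₁.prodChar y₂ x = y₁ x.1 * y₂ x.2 := rfl

lemma prodChar_injective :
    Function.Injective (fun p : AddChar G₁ ℂ × AddChar G₂ ℂ => p.1.prodChar p.2) := by
  rintro ⟨a₁, a₂⟩ ⟨b₁, b₂⟩ h
  have h1 : ∀ x : G₁, a₁ x = b₁ x := by
    intro x
    have := congrFun (congrArg DFunLike.coe h) (x, (0 : G₂))
    simpa [prodChar_apply] using this
  have h2 : ∀ x : G₂, a₂ x = b₂ x := by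
    intro x
    have := congrFun (congrArg DFunLike.coe h) ((0 : G₁), x)
    simpa [prodChar_apply] using this
  exact Prod.ext (DFunLike.ext _ _ h1) (DFunLike.ext _ _ h2)

lemma prodChar_sub (a₁ b₁ : AddChar G₁ ℂ) (a₂ b₂ : AddChar G₂ ℂ) :
    a₁.prodChar a₂ - b₁.prodChar b₂ = (a₁ - b₁).prodChar (a₂ - b₂) := by
  ext ⟨x₁, x₂⟩
  simp only [AddChar.sub_apply, prodChar_apply, Prod.fst_neg, Prod.snd_neg]
  ring

lemma prodChar_decomp (y : AddChar (G₁ × G₂) ℂ) :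
    y = (y.compAddMonoidHom (AddMonoidHom.inl G₁ G₂)).prodChar
        (y.compAddMonoidHom (AddMonoidHom.inr G₁ G₂)) := by
  ext ⟨x₁, x₂⟩
  simp only [prodChar_apply, AddChar.compAddMonoidHom_apply, AddMonoidHom.inl_apply,
    AddMonoidHom.inr_apply]
  rw [← AddChar.map_add_eq_mul]
  simp

end Aux

theorem stmt_4 {G₁ G₂ : Type*} [AddCommGroup G₁] [Fintype G₁]
    [AddCommGroup G₂] [Fintype G₂]
    (S₁ : Finset G₁) (T₁ : Finset (AddChar G₁ ℂ))
    (S₂ : Finset G₂) (T₂ : Finset (AddChar G₂ ℂ))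
    (h₁ : IsFormallyDual S₁ T₁) (h₂ : IsFormallyDual S₂ T₂) :
    IsFormallyDual (S₁ ×ˢ S₂) ((T₁ ×ˢ T₂).image fun p => p.1.prodChar p.2) := by
  intro y
  set y₁ := y.compAddMonoidHom (AddMonoidHom.inl G₁ G₂) with hy₁
  set y₂ := y.compAddMonoidHom (AddMonoidHom.inr G₁ G₂) with hy₂
  have hdec : y = y₁.prodChar y₂ := prodChar_decomp y
  -- LHS
  have hsum : ∑ v ∈ S₁ ×ˢ S₂, y v = (∑ v ∈ S₁, y₁ v) * (∑ v ∈ S₂, y₂ v) := by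
    rw [Finset.sum_product, Finset.sum_mul_sum]
    refine Finset.sum_congr rfl fun a _ => Finset.sum_congr rfl fun b _ => ?_
    rw [hdec]; rfl
  have hLHS : ‖((S₁ ×ˢ S₂).card : ℂ)⁻¹ * ∑ v ∈ S₁ ×ˢ S₂, y v‖ ^ 2 =
      ‖(S₁.card : ℂ)⁻¹ * ∑ v ∈ S₁, y₁ v‖ ^ 2 *
      ‖(S₂.card : ℂ)⁻¹ * ∑ v ∈ S₂, y₂ v‖ ^ 2 := by
    rw [hsum, Finset.card_product]
    push_cast
    rw [mul_inv]
    rw [show ((S₁.card : ℂ)⁻¹ * (S₂.card : ℂ)⁻¹) * ((∑ v ∈ S₁, y₁ v) * (∑ v ∈ S₂, y₂ v))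
      = ((S₁.card : ℂ)⁻¹ * ∑ v ∈ S₁, y₁ v) * ((S₂.card : ℂ)⁻¹ * ∑ v ∈ S₂, y₂ v) by ring]
    rw [norm_mul, mul_pow]
  -- cardinality of image
  have hinj := prodChar_injective (G₁ := G₁) (G₂ := G₂)
  have hcard : ((T₁ ×ˢ T₂).image fun p => p.1.prodChar p.2).card = T₁.card * T₂.card := by
    rw [Finset.card_image_of_injective _ hinj, Finset.card_product]
  -- counting
  set f : AddChar G₁ ℂ × AddChar G₂ ℂ → AddChar (G₁ × G₂) ℂ := fun p => p.1.prodChar p.2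
  have hcount :
      (((((T₁ ×ˢ T₂).image f) ×ˢ ((T₁ ×ˢ T₂).image f)).filter fun p => y = p.1 - p.2).card : ℕ)
      = ((T₁ ×ˢ T₁).filter fun p => y₁ = p.1 - p.2).card *
        ((T₂ ×ˢ T₂).filter fun p => y₂ = p.1 - p.2).card := by
    rw [← Finset.card_product, ← Finset.filter_product]
    refine (Finset.card_bij
      (fun p _ => (f (p.1.1, p.2.1), f (p.1.2, p.2.2))) ?_ ?_ ?_).symm
    · rintro ⟨⟨a₁, b₁⟩, ⟨a₂, b₂⟩⟩ hp
      simp only [Finset.mem_filter, Finset.mem_product] at hp ⊢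
      obtain ⟨⟨⟨ha₁, hb₁⟩, ⟨ha₂, hb₂⟩⟩, hc₁, hc₂⟩ := hp
      refine ⟨⟨Finset.mem_image_of_mem f (Finset.mem_product.2 ⟨ha₁, ha₂⟩),
        Finset.mem_image_of_mem f (Finset.mem_product.2 ⟨hb₁, hb₂⟩)⟩, ?_⟩
      show y = (a₁.prodChar a₂) - (b₁.prodChar b₂)
      rw [prodChar_sub, hdec, ← hc₁, ← hc₂]
    · rintro ⟨⟨a₁, b₁⟩, ⟨a₂, b₂⟩⟩ _ ⟨⟨c₁, d₁⟩, ⟨c₂, d₂⟩⟩ _ h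
      simp only [Prod.mk.injEq] at h
      have e1 := hinj h.1
      have e2 := hinj h.2
      simp only [Prod.mk.injEq] at e1 e2
      simp [e1.1, e1.2, e2.1, e2.2]
    · rintro ⟨w, w'⟩ hw
      simp only [Finset.mem_filter, Finset.mem_product, Finset.mem_image] at hw
      obtain ⟨⟨⟨⟨a₁, a₂⟩, ha, rfl⟩, ⟨⟨b₁, b₂⟩, hb, rfl⟩⟩, hc⟩ := hw
      have hc' : y₁.prodChar y₂ = (a₁ - b₁).prodChar (a₂ - b₂) := by
        rw [← hdec, hc, prodChar_sub]
      have := hinj (a₁ := (y₁, y₂)) (a₂ := (a₁ - b₁, a₂ - b₂)) hc'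
      simp only [Prod.mk.injEq] at this
      refine ⟨⟨(a₁, b₁), (a₂, b₂)⟩, ?_, rfl⟩
      simp only [Finset.mem_filter, Finset.mem_product]
      exact ⟨⟨⟨ha.1, hb.1⟩, ⟨ha.2, hb.2⟩⟩, this.1, this.2⟩
  rw [hLHS, h₁ y₁, h₂ y₂, hcard, hcount]
  push_cast
  ring
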